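/- Let n ≥ 1, let a₁ < a₂ < ⋯ < aₙ be positive integers, and let m₁, m₂, …, m_{n−1} be distinct positive integers with m_i ≠ a₁ + ⋯ + aₙ for all i. Assume further that the sums of elements over the nonempty subsets of {a₁, …, aₙ} are pairwise distinct, i.e., for any two distinct subsets {r₁, …, r_t} and {s₁, …, s_u} of {a₁, …, aₙ} one has r₁ + ⋯ + r_t ≠ s₁ + ⋯ + s_u. Then there exists a permutation σ of {1, …, n} such that for every l with 1 ≤ l ≤ n, the partial sum a_{σ(1)} + ⋯ + a_{σ(l)} is different from every m_i. -/

import Mathlib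

open Finset

-- factorial inequality: for 1 ≤ l, l+1 ≤ n we have l! (n-l)! ≤ (n-1)!
lemma fact_aux : ∀ n l : ℕ, 1 ≤ l → l + 1 ≤ n →
    l.factorial * (n - l).factorial ≤ (n - 1).factorial := by
  intro n
  induction n with
  | zero => intro l h1 h2; omega
  | succ n ih =>
    intro l h1 h2
    rcases eq_or_lt_of_le (Nat.lt_succ_iff.mp h2) with h | h
    · subst h
      have : l + 1 - l = 1 := by omega
      simp [this]
    · have ihl := ih l h1 h
      have he : n + 1 - l = (n - l) + 1 := by omega
      have hn1 : n + 1 - 1 = n := by omega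
      rw [he, hn1, Nat.factorial_succ]
      have hne : n = (n - 1) + 1 := by omega
      calc l.factorial * ((n - l + 1) * (n - l).factorial)
          = (n - l + 1) * (l.factorial * (n - l).factorial) := by ring
        _ ≤ (n - l + 1) * (n - 1).factorial := Nat.mul_le_mul_left _ ihl
        _ ≤ n * (n - 1).factorial := Nat.mul_le_mul_right _ (by omega)
        _ = n.factorial := Nat.mul_factorial_pred (by omega)

lemma card_K (n l : ℕ) (hl : l ≤ n) :
    (Finset.univ.filter (fun k : Fin n => (k : ℕ) < l)).card = l := by
  have : (Finset.univ.filter (fun k : Fin n => (k : ℕ) < l)) =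
      (Finset.univ : Finset (Fin l)).map
        ⟨fun j => Fin.castLE hl j, Fin.castLE_injective hl⟩ := by
    ext k
    simp only [mem_filter, mem_univ, true_and, mem_map, Function.Embedding.coeFn_mk]
    constructor
    · intro hk; exact ⟨⟨(k : ℕ), hk⟩, rfl⟩
    · rintro ⟨j, rfl⟩; exact j.2
  rw [this, card_map, card_univ, Fintype.card_fin]

lemma card_fixing (n l : ℕ) (hl : l ≤ n) (S : Finset (Fin n)) (hS : S.card = l) :
    (Finset.univ.filter (fun σ : Equiv.Perm (Fin n) =>
      (Finset.univ.filter (fun k : Fin n => (k : ℕ) < l)).image σ = S)).card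
      ≤ l.factorial * (n - l).factorial := by
  classical
  set K := Finset.univ.filter (fun k : Fin n => (k : ℕ) < l) with hK
  have hKcard : K.card = l := card_K n l hl
  set E := Finset.univ.filter (fun σ : Equiv.Perm (Fin n) => K.image σ = S) with hE
  have hmem : ∀ σ ∈ E, ∀ k : Fin n, k ∈ K → σ k ∈ S := by
    intro σ hσ k hk
    have h2 := (mem_filter.mp hσ).2
    rw [← h2]
    exact mem_image_of_mem σ hk
  have hmem' : ∀ σ ∈ E, ∀ k : Fin n, k ∉ K → σ k ∉ S := by
    intro σ hσ k hk hkS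
    have h2 := (mem_filter.mp hσ).2
    rw [← h2] at hkS
    obtain ⟨j, hj, hjk⟩ := mem_image.mp hkS
    exact hk (σ.injective hjk ▸ hj)
  let F : {σ : Equiv.Perm (Fin n) // σ ∈ E} →
      ({x : Fin n // x ∈ K} ↪ {x : Fin n // x ∈ S}) ×
      ({x : Fin n // x ∉ K} ↪ {x : Fin n // x ∉ S}) :=
    fun σ => (⟨fun k => ⟨σ.1 k.1, hmem σ.1 σ.2 k.1 k.2⟩,
                fun x y hxy => Subtype.ext (σ.1.injective (congrArg Subtype.val hxy))⟩,
              ⟨fun k => ⟨σ.1 k.1, hmem' σ.1 σ.2 k.1 k.2⟩,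
                fun x y hxy => Subtype.ext (σ.1.injective (congrArg Subtype.val hxy))⟩)
  have hFinj : Function.Injective F := by
    intro σ τ hστ
    have h1 := congrArg Prod.fst hστ
    have h2 := congrArg Prod.snd hστ
    apply Subtype.ext
    apply Equiv.ext
    intro x
    by_cases hx : x ∈ K
    · exact congrArg Subtype.val (DFunLike.congr_fun h1 ⟨x, hx⟩)
    · exact congrArg Subtype.val (DFunLike.congr_fun h2 ⟨x, hx⟩)
  have hcard := Fintype.card_le_of_injective F hFinj
  have c1 : Fintype.card {x : Fin n // x ∈ K} = l :=
    (Fintype.card_of_subtype K fun _ => Iff.rfl).trans hKcard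
  have c2 : Fintype.card {x : Fin n // x ∈ S} = l :=
    (Fintype.card_of_subtype S fun _ => Iff.rfl).trans hS
  have c3 : Fintype.card {x : Fin n // x ∉ K} = n - l := by
    rw [Fintype.card_subtype_compl, c1, Fintype.card_fin]
  have c4 : Fintype.card {x : Fin n // x ∉ S} = n - l := by
    rw [Fintype.card_subtype_compl, c2, Fintype.card_fin]
  rw [Fintype.card_coe, Fintype.card_prod, Fintype.card_embedding_eq,
    Fintype.card_embedding_eq, c1, c2, c3, c4, Nat.descFactorial_self,
    Nat.descFactorial_self] at hcard
  exact hcard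


/-- Theorem 2 of the paper: if the positive integers `a 0 < a 1 < ⋯ < a (n-1)`
have pairwise distinct nonempty-subset sums, and `m 0, …, m (n-2)` are distinct
positive integers, none equal to `∑ i, a i`, then some order of the jumps has
all its partial sums different from every `m i`. -/
theorem theorem2 (n : ℕ) (hn : 1 ≤ n) (a : Fin n → ℤ)
    (ha_pos : ∀ i, 0 < a i) (ha_mono : StrictMono a)
    (hsums : ∀ S T : Finset (Fin n), S.Nonempty → T.Nonempty → S ≠ T →
      (∑ i ∈ S, a i) ≠ (∑ i ∈ T, a i))
    (m : Fin (n - 1) → ℤ) (hm_pos : ∀ i, 0 < m i) (hm_inj : Function.Injective m)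
    (hm_ne : ∀ i, m i ≠ ∑ i, a i) :
    ∃ σ : Equiv.Perm (Fin n), ∀ l : ℕ, 1 ≤ l → l ≤ n → ∀ i : Fin (n - 1),
      (∑ k ∈ Finset.univ.filter (fun k : Fin n => (k : ℕ) < l), a (σ k)) ≠ m i := by
  classical
  -- the "bad" permutations for a given mine i
  set Bad : Fin (n - 1) → Finset (Equiv.Perm (Fin n)) := fun i =>
    Finset.univ.filter (fun σ : Equiv.Perm (Fin n) => ∃ l : ℕ, 1 ≤ l ∧ l ≤ n ∧
      (∑ k ∈ Finset.univ.filter (fun k : Fin n => (k : ℕ) < l), a (σ k)) = m i)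
    with hBad
  -- each Bad i has at most (n-1)! elements
  have key : ∀ i, (Bad i).card ≤ (n - 1).factorial := by
    intro i
    rcases (Bad i).eq_empty_or_nonempty with h | ⟨σ₀, hσ₀⟩
    · simp [h]
    · obtain ⟨l₀, hl₀1, hl₀n, hsum₀⟩ := (mem_filter.mp hσ₀).2
      set S : Finset (Fin n) :=
        (Finset.univ.filter (fun k : Fin n => (k : ℕ) < l₀)).image σ₀ with hSdef
      have hScard : S.card = l₀ := by
        rw [hSdef, Finset.card_image_of_injective _ σ₀.injective, card_K n l₀ hl₀n]
      have hSsum : (∑ j ∈ S, a j) = m i := by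
        rw [hSdef, Finset.sum_image (fun x _ y _ h => σ₀.injective h)]
        exact hsum₀
      have hSne : S.Nonempty := Finset.card_pos.mp (by omega)
      have hSnu : S ≠ Finset.univ := by
        intro h
        exact hm_ne i (by rw [← hSsum, h])
      have hSlt : S.card ≤ n - 1 := by
        have := Finset.card_lt_card ((Finset.ssubset_univ_iff).mpr hSnu)
        rw [Finset.card_univ, Fintype.card_fin] at this
        omega
      -- uniqueness: every bad σ has its prefix image equal to S
      have hsub : Bad i ⊆ Finset.univ.filter (fun σ : Equiv.Perm (Fin n) =>
          (Finset.univ.filter (fun k : Fin n => (k : ℕ) < S.card)).image σ = S) := by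
        intro σ hσ
        obtain ⟨l, hl1, hln, hsum⟩ := (mem_filter.mp hσ).2
        set T : Finset (Fin n) :=
          (Finset.univ.filter (fun k : Fin n => (k : ℕ) < l)).image σ with hTdef
        have hTcard : T.card = l := by
          rw [hTdef, Finset.card_image_of_injective _ σ.injective, card_K n l hln]
        have hTsum : (∑ j ∈ T, a j) = m i := by
          rw [hTdef, Finset.sum_image (fun x _ y _ h => σ.injective h)]
          exact hsum
        have hTne : T.Nonempty := Finset.card_pos.mp (by omega)
        have hTS : T = S := by
          by_contra hne
          exact hsums T S hTne hSne hne (by rw [hTsum, hSsum])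
        have hlcard : S.card = l := by rw [← hTS, hTcard]
        refine mem_filter.mpr ⟨Finset.mem_univ _, ?_⟩
        rw [hlcard, ← hTdef, hTS]
      calc (Bad i).card
          ≤ _ := Finset.card_le_card hsub
        _ ≤ S.card.factorial * (n - S.card).factorial :=
            card_fixing n S.card (by omega) S rfl
        _ ≤ (n - 1).factorial := fact_aux n S.card (by omega) (by omega)
  -- counting: the union of the Bad i is not everything
  have hcount : (Finset.univ.biUnion Bad).card < Fintype.card (Equiv.Perm (Fin n)) := by
    calc (Finset.univ.biUnion Bad).card
        ≤ ∑ i : Fin (n - 1), (Bad i).card := Finset.card_biUnion_le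
      _ ≤ ∑ _i : Fin (n - 1), (n - 1).factorial := Finset.sum_le_sum (fun i _ => key i)
      _ = (n - 1) * (n - 1).factorial := by
          rw [Finset.sum_const, Finset.card_univ, Fintype.card_fin, smul_eq_mul]
      _ < n * (n - 1).factorial :=
          (Nat.mul_lt_mul_right (Nat.factorial_pos _)).mpr (by omega)
      _ = n.factorial := Nat.mul_factorial_pred (by omega)
      _ = Fintype.card (Equiv.Perm (Fin n)) := by
          rw [Fintype.card_perm, Fintype.card_fin]
  obtain ⟨σ, hσ⟩ : ∃ σ : Equiv.Perm (Fin n), σ ∉ Finset.univ.biUnion Bad := by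
    by_contra h
    push_neg at h
    have : Finset.univ.biUnion Bad = Finset.univ := Finset.eq_univ_iff_forall.mpr h
    rw [this, Finset.card_univ] at hcount
    exact lt_irrefl _ hcount
  refine ⟨σ, fun l hl1 hln i heq => hσ ?_⟩
  exact Finset.mem_biUnion.mpr ⟨i, Finset.mem_univ _,
    mem_filter.mpr ⟨Finset.mem_univ _, l, hl1, hln, heq⟩⟩
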